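/- arXiv:2409.18487 — 5 statements merged into one kernel-verified Lean document; each statement's English description precedes it below -/
import Mathlib

section
/- If u and v are two real-valued solutions of y'' + ω²q(t)y = 0 whose Wronskian u v' − v u' is identically 1, then the function α' defined by α'(t) = 1/(u(t)² + v(t)²) satisfies Kummer's equation (α')² − ω²q − (3/4)(α''/α')² + (1/2)α'''/α' = 0, provided u² + v² > 0 on the interval. -/
private lemma kummer_algebra (a b a' b' Q : ℝ) (hR : a ^ 2 + b ^ 2 ≠ 0)
    (hw : a * b' - b * a' = 1) :
    (1 / (a ^ 2 + b ^ 2)) ^ 2 - Q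
      - (3 / 4) * ((-(2 * a * a' + 2 * b * b') / (a ^ 2 + b ^ 2) ^ 2)
          / (1 / (a ^ 2 + b ^ 2))) ^ 2
      + (1 / 2) * (((-(2 * a' * a' + 2 * a * (-(Q * a)) + 2 * b' * b' + 2 * b * (-(Q * b)))
              * (a ^ 2 + b ^ 2) ^ 2
            - -(2 * a * a' + 2 * b * b') * (2 * (a ^ 2 + b ^ 2) * (2 * a * a' + 2 * b * b')))
            / ((a ^ 2 + b ^ 2) ^ 2) ^ 2)
          / (1 / (a ^ 2 + b ^ 2))) = 0 := by
  have h : (1 / (a ^ 2 + b ^ 2)) ^ 2 - Q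
      - (3 / 4) * ((-(2 * a * a' + 2 * b * b') / (a ^ 2 + b ^ 2) ^ 2)
          / (1 / (a ^ 2 + b ^ 2))) ^ 2
      + (1 / 2) * (((-(2 * a' * a' + 2 * a * (-(Q * a)) + 2 * b' * b' + 2 * b * (-(Q * b)))
              * (a ^ 2 + b ^ 2) ^ 2
            - -(2 * a * a' + 2 * b * b') * (2 * (a ^ 2 + b ^ 2) * (2 * a * a' + 2 * b * b')))
            / ((a ^ 2 + b ^ 2) ^ 2) ^ 2)
          / (1 / (a ^ 2 + b ^ 2)))
      = (1 - (a * b' - b * a') ^ 2) / (a ^ 2 + b ^ 2) ^ 2 := by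
    field_simp
    ring
  rw [h, hw]
  norm_num

/-- If `u`, `v` are real solutions of `y'' + ω² q y = 0` with Wronskian
`u v' − v u' = 1` and `u² + v² > 0`, then `α' := 1/(u² + v²)` satisfies
Kummer's equation. -/
theorem kummer_from_solutions
    (I : Set ℝ) (hI : IsOpen I)
    (q : ℝ → ℝ) (hq : ContDiffOn ℝ 1 q I) (ω : ℝ)
    (u v : ℝ → ℝ)
    (hu : ContDiffOn ℝ 3 u I) (hv : ContDiffOn ℝ 3 v I)
    (huode : ∀ t ∈ I, deriv (deriv u) t + ω ^ 2 * q t * u t = 0)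
    (hvode : ∀ t ∈ I, deriv (deriv v) t + ω ^ 2 * q t * v t = 0)
    (hw : ∀ t ∈ I, u t * deriv v t - v t * deriv u t = 1)
    (hpos : ∀ t ∈ I, 0 < (u t) ^ 2 + (v t) ^ 2)
    (ap : ℝ → ℝ) (hap : ap = fun t => 1 / ((u t) ^ 2 + (v t) ^ 2)) :
    ∀ t ∈ I,
      (ap t) ^ 2 - ω ^ 2 * q t
        - (3 / 4) * (deriv ap t / ap t) ^ 2
        + (1 / 2) * (deriv (deriv ap) t / ap t) = 0 := by
  subst hap
  -- first derivatives of u and v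
  have hu1 : ∀ s ∈ I, HasDerivAt u (deriv u s) s := fun s hs =>
    ((hu.differentiableOn (by norm_num)).differentiableAt (hI.mem_nhds hs)).hasDerivAt
  have hv1 : ∀ s ∈ I, HasDerivAt v (deriv v s) s := fun s hs =>
    ((hv.differentiableOn (by norm_num)).differentiableAt (hI.mem_nhds hs)).hasDerivAt
  -- deriv u, deriv v are C² on I
  have hu' : ContDiffOn ℝ 2 (deriv u) I := hu.deriv_of_isOpen hI (by norm_num)
  have hv' : ContDiffOn ℝ 2 (deriv v) I := hv.deriv_of_isOpen hI (by norm_num)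
  have hu2 : ∀ s ∈ I, HasDerivAt (deriv u) (deriv (deriv u) s) s := fun s hs =>
    ((hu'.differentiableOn (by norm_num)).differentiableAt (hI.mem_nhds hs)).hasDerivAt
  have hv2 : ∀ s ∈ I, HasDerivAt (deriv v) (deriv (deriv v) s) s := fun s hs =>
    ((hv'.differentiableOn (by norm_num)).differentiableAt (hI.mem_nhds hs)).hasDerivAt
  -- derivative of R = u² + v²
  have hR : ∀ s ∈ I, HasDerivAt (fun s => u s ^ 2 + v s ^ 2)
      (2 * u s * deriv u s + 2 * v s * deriv v s) s := by
    intro s hs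
    have h := ((hu1 s hs).pow 2).add ((hv1 s hs).pow 2)
    refine h.congr_deriv ?_
    norm_num
  have hne : ∀ s ∈ I, (u s ^ 2 + v s ^ 2) ≠ 0 := fun s hs => (hpos s hs).ne'
  -- first derivative of ap
  have hap1 : ∀ s ∈ I, HasDerivAt (fun t => 1 / (u t ^ 2 + v t ^ 2))
      (-(2 * u s * deriv u s + 2 * v s * deriv v s) / (u s ^ 2 + v s ^ 2) ^ 2) s := by
    intro s hs
    have h := (hR s hs).inv (hne s hs)
    simp only [one_div]
    exact h
  have hDap : ∀ s ∈ I, deriv (fun t => 1 / (u t ^ 2 + v t ^ 2)) s =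
      -(2 * u s * deriv u s + 2 * v s * deriv v s) / (u s ^ 2 + v s ^ 2) ^ 2 :=
    fun s hs => (hap1 s hs).deriv
  intro t ht
  -- second derivative of ap at t
  have hNd : HasDerivAt (fun s => -(2 * u s * deriv u s + 2 * v s * deriv v s))
      (-(2 * deriv u t * deriv u t + 2 * u t * deriv (deriv u) t
         + 2 * deriv v t * deriv v t + 2 * v t * deriv (deriv v) t)) t := by
    have h := ((((hu1 t ht).const_mul 2).mul (hu2 t ht)).add
      (((hv1 t ht).const_mul 2).mul (hv2 t ht))).neg
    refine h.congr_deriv ?_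
    ring
  have hDd : HasDerivAt (fun s => (u s ^ 2 + v s ^ 2) ^ 2)
      (2 * (u t ^ 2 + v t ^ 2) * (2 * u t * deriv u t + 2 * v t * deriv v t)) t := by
    have h := (hR t ht).pow 2
    refine h.congr_deriv ?_
    norm_num
  have hDne : ((u t ^ 2 + v t ^ 2) ^ 2) ≠ 0 := pow_ne_zero 2 (hne t ht)
  have hF : HasDerivAt (fun s => -(2 * u s * deriv u s + 2 * v s * deriv v s) / (u s ^ 2 + v s ^ 2) ^ 2)
      ((-(2 * deriv u t * deriv u t + 2 * u t * deriv (deriv u) t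
         + 2 * deriv v t * deriv v t + 2 * v t * deriv (deriv v) t) * (u t ^ 2 + v t ^ 2) ^ 2
        - -(2 * u t * deriv u t + 2 * v t * deriv v t)
          * (2 * (u t ^ 2 + v t ^ 2) * (2 * u t * deriv u t + 2 * v t * deriv v t)))
        / ((u t ^ 2 + v t ^ 2) ^ 2) ^ 2) t := hNd.div hDd hDne
  have hDDap : deriv (deriv (fun t => 1 / (u t ^ 2 + v t ^ 2))) t =
      (-(2 * deriv u t * deriv u t + 2 * u t * deriv (deriv u) t
         + 2 * deriv v t * deriv v t + 2 * v t * deriv (deriv v) t) * (u t ^ 2 + v t ^ 2) ^ 2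
        - -(2 * u t * deriv u t + 2 * v t * deriv v t)
          * (2 * (u t ^ 2 + v t ^ 2) * (2 * u t * deriv u t + 2 * v t * deriv v t)))
        / ((u t ^ 2 + v t ^ 2) ^ 2) ^ 2 := by
    have heq : deriv (fun t => 1 / (u t ^ 2 + v t ^ 2)) =ᶠ[nhds t]
        (fun s => -(2 * u s * deriv u s + 2 * v s * deriv v s) / (u s ^ 2 + v s ^ 2) ^ 2) := by
      filter_upwards [hI.mem_nhds ht] with s hs using hDap s hs
    rw [heq.deriv_eq]
    exact hF.deriv
  -- substitute everything
  rw [hDap t ht, hDDap]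
  have huu : deriv (deriv u) t = -(ω ^ 2 * q t * u t) := by linarith [huode t ht]
  have hvv : deriv (deriv v) t = -(ω ^ 2 * q t * v t) := by linarith [hvode t ht]
  rw [huu, hvv]
  have := kummer_algebra (u t) (v t) (deriv u t) (deriv v t) (ω ^ 2 * q t) (hne t ht) (hw t ht)
  convert this using 4 <;> ring
end

section
/- The Liouville-Green logarithmic derivative r_LG(t) = iω√(q(t)) − (1/4) q'(t)/q(t) satisfies |r_LG' + r_LG² + ω²q| ≤ (5/16) q_min^{−2} + (1/4) q_min^{−1} pointwise, where the bound is independent of ω, provided q ≥ q_min > 0 and |q|, |q'|, |q''| ≤ 1. -/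
open Set

lemma hasDerivWithinAt_ofReal_comp' {f : ℝ → ℝ} {u x : ℝ} {s : Set ℝ}
    (hf : HasDerivWithinAt f u s x) :
    HasDerivWithinAt (fun y => (f y : ℂ)) (u : ℂ) s x := by
  exact hf.ofReal_comp

/-- The Liouville–Green logarithmic derivative
`r_LG = iω√q − q'/(4q)` satisfies
`|r_LG' + r_LG² + ω² q| ≤ (5/16) q_min⁻² + (1/4) q_min⁻¹` on `[a,b]`,
a bound independent of `ω`. -/
theorem liouville_green_residual_bound
    (a b : ℝ) (hab : a < b)
    (q : ℝ → ℝ) (hq : ContDiffOn ℝ 2 q (Icc a b))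
    (qmin : ℝ) (hqmin : 0 < qmin)
    (hlow : ∀ t ∈ Icc a b, qmin ≤ q t)
    (hb0 : ∀ t ∈ Icc a b, |q t| ≤ 1)
    (hb1 : ∀ t ∈ Icc a b, |derivWithin q (Icc a b) t| ≤ 1)
    (hb2 : ∀ t ∈ Icc a b, |derivWithin (derivWithin q (Icc a b)) (Icc a b) t| ≤ 1)
    (ω : ℝ)
    (rLG : ℝ → ℂ)
    (hrLG : rLG = fun t => Complex.I * Complex.ofReal ω
        * Complex.ofReal (Real.sqrt (q t))
        - Complex.ofReal (derivWithin q (Icc a b) t) / (4 * Complex.ofReal (q t))) :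
    ∀ t ∈ Icc a b,
      ‖derivWithin rLG (Icc a b) t + (rLG t) ^ 2
          + (ω : ℂ) ^ 2 * (q t : ℂ)‖
        ≤ (5 / 16) * qmin⁻¹ ^ 2 + (1 / 4) * qmin⁻¹ := by
  intro t ht
  have hU : UniqueDiffOn ℝ (Icc a b) := uniqueDiffOn_Icc hab
  set q1 : ℝ → ℝ := derivWithin q (Icc a b) with hq1def
  set q2 : ℝ → ℝ := derivWithin q1 (Icc a b) with hq2def
  -- positivity facts
  have hqt : qmin ≤ q t := hlow t ht
  have hqtpos : 0 < q t := lt_of_lt_of_le hqmin hqt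
  have hqne : q t ≠ 0 := ne_of_gt hqtpos
  have hsq : Real.sqrt (q t) ^ 2 = q t := Real.sq_sqrt hqtpos.le
  have hsne : Real.sqrt (q t) ≠ 0 := by positivity
  -- differentiability
  have hqd : DifferentiableOn ℝ q (Icc a b) := hq.differentiableOn (by norm_num)
  have hq1cd : ContDiffOn ℝ 1 q1 (Icc a b) := hq.derivWithin hU (by norm_num)
  have hq1d : DifferentiableOn ℝ q1 (Icc a b) := hq1cd.differentiableOn (by norm_num)
  have hQ : HasDerivWithinAt q (q1 t) (Icc a b) t := (hqd t ht).hasDerivWithinAt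
  have hQ1 : HasDerivWithinAt q1 (q2 t) (Icc a b) t := (hq1d t ht).hasDerivWithinAt
  -- derivative of sqrt ∘ q
  have hS : HasDerivWithinAt (fun y => Real.sqrt (q y)) (1 / (2 * Real.sqrt (q t)) * q1 t)
      (Icc a b) t := (Real.hasDerivAt_sqrt hqne).comp_hasDerivWithinAt t hQ
  -- derivative of rLG
  have h1 : HasDerivWithinAt (fun y : ℝ => Complex.I * (ω : ℂ) * ((Real.sqrt (q y) : ℝ) : ℂ))
      (Complex.I * (ω : ℂ) * ((1 / (2 * Real.sqrt (q t)) * q1 t : ℝ) : ℂ)) (Icc a b) t :=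
    (hasDerivWithinAt_ofReal_comp' hS).const_mul _
  have hden : (4 : ℂ) * ((q t : ℝ) : ℂ) ≠ 0 := by
    simp [hqne]
  have h2 : HasDerivWithinAt (fun y : ℝ => ((q1 y : ℝ) : ℂ) / (4 * ((q y : ℝ) : ℂ)))
      ((((q2 t : ℝ) : ℂ) * (4 * (q t : ℂ)) - ((q1 t : ℝ) : ℂ) * (4 * (q1 t : ℂ)))
        / (4 * (q t : ℂ)) ^ 2) (Icc a b) t := by
    exact (hasDerivWithinAt_ofReal_comp' hQ1).div
      ((hasDerivWithinAt_ofReal_comp' hQ).const_mul 4) hden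
  have hr : HasDerivWithinAt rLG
      (Complex.I * (ω : ℂ) * ((1 / (2 * Real.sqrt (q t)) * q1 t : ℝ) : ℂ)
        - (((q2 t : ℂ)) * (4 * (q t : ℂ)) - ((q1 t : ℂ)) * (4 * (q1 t : ℂ)))
          / (4 * (q t : ℂ)) ^ 2) (Icc a b) t := by
    rw [hrLG]; exact h1.sub h2
  have hder : derivWithin rLG (Icc a b) t
      = Complex.I * (ω : ℂ) * ((1 / (2 * Real.sqrt (q t)) * q1 t : ℝ) : ℂ)
        - (((q2 t : ℂ)) * (4 * (q t : ℂ)) - ((q1 t : ℂ)) * (4 * (q1 t : ℂ)))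
          / (4 * (q t : ℂ)) ^ 2 := hr.derivWithin (hU t ht)
  -- algebraic simplification
  have hSC : ((Real.sqrt (q t) : ℝ) : ℂ) ≠ 0 := by exact_mod_cast hsne
  have hQC : ((q t : ℝ) : ℂ) ≠ 0 := by exact_mod_cast hqne
  have hsqC : ((Real.sqrt (q t) : ℝ) : ℂ) ^ 2 = (q t : ℂ) := by exact_mod_cast hsq
  have key : derivWithin rLG (Icc a b) t + (rLG t) ^ 2 + (ω : ℂ) ^ 2 * (q t : ℂ)
      = ((- q2 t / (4 * q t) + (5 / 16) * (q1 t) ^ 2 / (q t) ^ 2 : ℝ) : ℂ) := by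
    rw [hder, hrLG]
    push_cast
    rw [← hsqC]
    field_simp [hSC]
    linear_combination ((ω:ℂ)^2 * ((Real.sqrt (q t) : ℝ) : ℂ)^6 * 512) * Complex.I_sq
  rw [key, Complex.norm_real, Real.norm_eq_abs]
  -- numeric bound
  have hb1t : |q1 t| ≤ 1 := hb1 t ht
  have hb2t : |q2 t| ≤ 1 := hb2 t ht
  have hkey1 : (1:ℝ) ≤ qmin⁻¹ * q t := by
    rw [← inv_mul_cancel₀ (ne_of_gt hqmin)]
    exact mul_le_mul_of_nonneg_left hqt (by positivity)
  have hkey2 : (1:ℝ) ≤ qmin⁻¹ ^ 2 * q t ^ 2 := by nlinarith [inv_pos.mpr hqmin]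
  have h1b : |q2 t / (4 * q t)| ≤ (1 / 4) * qmin⁻¹ := by
    rw [abs_div, abs_of_pos (by positivity : (0:ℝ) < 4 * q t),
      div_le_iff₀ (by positivity)]
    nlinarith [hb2t, inv_pos.mpr hqmin]
  have h2b : |(5 / 16) * (q1 t) ^ 2 / (q t) ^ 2| ≤ (5 / 16) * qmin⁻¹ ^ 2 := by
    rw [abs_div, abs_of_nonneg (by positivity : (0:ℝ) ≤ 5 / 16 * q1 t ^ 2),
      abs_of_pos (by positivity : (0:ℝ) < q t ^ 2),
      div_le_iff₀ (by positivity)]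
    have hq1sq : q1 t ^ 2 ≤ 1 := by nlinarith [abs_nonneg (q1 t), sq_abs (q1 t)]
    nlinarith [sq_nonneg (q1 t), sq_nonneg (qmin⁻¹)]
  calc |(- q2 t / (4 * q t) + (5 / 16) * (q1 t) ^ 2 / (q t) ^ 2 : ℝ)|
      ≤ |q2 t / (4 * q t)| + |(5 / 16) * (q1 t) ^ 2 / (q t) ^ 2| := by
        rw [neg_div]; exact (abs_add_le _ _).trans (by rw [abs_neg])
    _ ≤ (1 / 4) * qmin⁻¹ + (5 / 16) * qmin⁻¹ ^ 2 := add_le_add h1b h2b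
    _ = (5 / 16) * qmin⁻¹ ^ 2 + (1 / 4) * qmin⁻¹ := by ring
end

section
/- Let S[δ](t) = −exp(−H(t)) ∫_a^t exp(H(s)) ((δ(s))² + G(s)) ds, where |exp(±H(t))| ≤ B on [a,b] and ‖−exp(−H(·)) ∫_a^· exp(H(s)) G(s) ds‖_∞ ≤ C/ω^M with C ≥ B²(b−a). If ω^M ≥ 8C², then S maps the closed ball of radius 2C/ω^M in L∞([a,b];ℂ) (centered at 0) into itself and is a contraction on it with contraction constant 4C²/ω^M ≤ 1/2; hence S has a unique fixed point δ in this ball. -/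
open Set

/-- The operator `S[δ](t) = −exp(−H(t)) ∫_a^t exp(H(s)) (δ(s)² + G(s)) ds`
maps the closed ball of radius `2C/ω^M` of continuous functions on `[a,b]`
into itself, is a contraction there with constant `4C²/ω^M ≤ 1/2`, and hence
has a unique fixed point in this ball. -/
theorem riccati_contraction
    (a b : ℝ) (hab : a ≤ b)
    (H : ℝ → ℂ) (hH : ContinuousOn H (Icc a b))
    (G : ℝ → ℂ) (hG : ContinuousOn G (Icc a b))
    (B C ω : ℝ) (M : ℕ) (hM : 0 < M) (hC : 0 < C) (hω : 0 < ω)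
    (hB1 : ∀ t ∈ Icc a b, ‖Complex.exp (H t)‖ ≤ B)
    (hB2 : ∀ t ∈ Icc a b, ‖Complex.exp (-H t)‖ ≤ B)
    (hCB : B ^ 2 * (b - a) ≤ C)
    (h0 : ∀ t ∈ Icc a b,
      ‖Complex.exp (-H t) * ∫ s in a..t, Complex.exp (H s) * G s‖ ≤ C / ω ^ M)
    (hbig : 8 * C ^ 2 ≤ ω ^ M)
    (S : (ℝ → ℂ) → (ℝ → ℂ))
    (hS : S = fun δ t => -Complex.exp (-H t)
      * ∫ s in a..t, Complex.exp (H s) * ((δ s) ^ 2 + G s)) :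
    4 * C ^ 2 / ω ^ M ≤ 1 / 2 ∧
    (∀ δ : ℝ → ℂ, ContinuousOn δ (Icc a b) →
      (∀ t ∈ Icc a b, ‖δ t‖ ≤ 2 * C / ω ^ M) →
      ∀ t ∈ Icc a b, ‖S δ t‖ ≤ 2 * C / ω ^ M) ∧
    (∀ δ₁ δ₂ : ℝ → ℂ, ContinuousOn δ₁ (Icc a b) → ContinuousOn δ₂ (Icc a b) →
      (∀ t ∈ Icc a b, ‖δ₁ t‖ ≤ 2 * C / ω ^ M) →
      (∀ t ∈ Icc a b, ‖δ₂ t‖ ≤ 2 * C / ω ^ M) →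
      ∀ K : ℝ, (∀ s ∈ Icc a b, ‖δ₁ s - δ₂ s‖ ≤ K) →
        ∀ t ∈ Icc a b, ‖S δ₁ t - S δ₂ t‖ ≤ (4 * C ^ 2 / ω ^ M) * K) ∧
    (∃ δ : ℝ → ℂ, ContinuousOn δ (Icc a b) ∧
      (∀ t ∈ Icc a b, ‖δ t‖ ≤ 2 * C / ω ^ M) ∧
      (∀ t ∈ Icc a b, δ t = S δ t) ∧
      (∀ δ' : ℝ → ℂ, ContinuousOn δ' (Icc a b) →
        (∀ t ∈ Icc a b, ‖δ' t‖ ≤ 2 * C / ω ^ M) →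
        (∀ t ∈ Icc a b, δ' t = S δ' t) →
        ∀ t ∈ Icc a b, δ' t = δ t)) := by
  subst hS
  have haI : a ∈ Icc a b := ⟨le_rfl, hab⟩
  have hωM : (0:ℝ) < ω ^ M := pow_pos hω M
  have hB0 : 0 < B := lt_of_lt_of_le (norm_pos_iff.2 (Complex.exp_ne_zero _)) (hB1 a haI)
  set r : ℝ := 2 * C / ω ^ M with hrdef
  set k : ℝ := 4 * C ^ 2 / ω ^ M with hkdef
  have hr0 : 0 ≤ r := by rw [hrdef]; positivity
  have hk0 : 0 ≤ k := by rw [hkdef]; positivity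
  have hkhalf : k ≤ 1 / 2 := by rw [hkdef, div_le_iff₀ hωM]; linarith
  -- integrability
  have hint : ∀ (φ : ℝ → ℂ), ContinuousOn φ (Icc a b) → ∀ t ∈ Icc a b,
      IntervalIntegrable (fun s => Complex.exp (H s) * φ s) MeasureTheory.volume a t := by
    intro φ hφ t ht
    apply ContinuousOn.intervalIntegrable
    have hsub : uIcc a t ⊆ Icc a b := by
      rw [uIcc_of_le ht.1]; exact Icc_subset_Icc le_rfl ht.2
    exact (hH.mono hsub).cexp.mul (hφ.mono hsub)
  -- basic bound
  have hbound : ∀ (φ : ℝ → ℂ) (K : ℝ), 0 ≤ K → (∀ s ∈ Icc a b, ‖φ s‖ ≤ K) →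
      ∀ t ∈ Icc a b,
      ‖Complex.exp (-H t) * ∫ s in a..t, Complex.exp (H s) * φ s‖ ≤ C * K := by
    intro φ K hK hφK t ht
    rw [norm_mul]
    have h1 : ‖∫ s in a..t, Complex.exp (H s) * φ s‖ ≤ (B * K) * |t - a| := by
      apply intervalIntegral.norm_integral_le_of_norm_le_const
      intro s hs
      have hsI : s ∈ Icc a b := by
        rw [uIoc_of_le ht.1] at hs
        exact ⟨le_of_lt hs.1, hs.2.trans ht.2⟩
      rw [norm_mul]
      exact mul_le_mul (hB1 s hsI) (hφK s hsI) (norm_nonneg _) hB0.le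
    have h2 : |t - a| ≤ b - a := by
      rw [abs_of_nonneg (by linarith [ht.1])]; linarith [ht.2]
    calc ‖Complex.exp (-H t)‖ * ‖∫ s in a..t, Complex.exp (H s) * φ s‖
        ≤ B * ((B * K) * (b - a)) := by
          refine mul_le_mul (hB2 t ht) (h1.trans ?_) (norm_nonneg _) hB0.le
          exact mul_le_mul_of_nonneg_left h2 (by positivity)
      _ = B ^ 2 * (b - a) * K := by ring
      _ ≤ C * K := mul_le_mul_of_nonneg_right hCB hK
  -- part 2 : maps ball to ball
  have hmap : ∀ δ : ℝ → ℂ, ContinuousOn δ (Icc a b) →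
      (∀ t ∈ Icc a b, ‖δ t‖ ≤ r) → ∀ t ∈ Icc a b,
      ‖-Complex.exp (-H t) * ∫ s in a..t, Complex.exp (H s) * ((δ s) ^ 2 + G s)‖ ≤ r := by
    intro δ hδ hδr t ht
    have hi1 : IntervalIntegrable (fun s => Complex.exp (H s) * (δ s) ^ 2)
        MeasureTheory.volume a t := hint _ (hδ.pow 2) t ht
    have hi2 : IntervalIntegrable (fun s => Complex.exp (H s) * G s)
        MeasureTheory.volume a t := hint _ hG t ht
    have hsplit : (∫ s in a..t, Complex.exp (H s) * ((δ s) ^ 2 + G s)) =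
        (∫ s in a..t, Complex.exp (H s) * (δ s) ^ 2)
          + ∫ s in a..t, Complex.exp (H s) * G s := by
      rw [← intervalIntegral.integral_add hi1 hi2]
      apply intervalIntegral.integral_congr
      intro s _; ring
    rw [hsplit, neg_mul, norm_neg, mul_add]
    have hA : ‖Complex.exp (-H t) * ∫ s in a..t, Complex.exp (H s) * (δ s) ^ 2‖ ≤ C * r ^ 2 :=
      hbound _ (r ^ 2) (pow_nonneg hr0 2)
        (fun s hs => by
          rw [norm_pow]; exact pow_le_pow_left₀ (norm_nonneg _) (hδr s hs) 2) t ht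
    have hB' := h0 t ht
    have htri := norm_add_le (Complex.exp (-H t) * ∫ s in a..t, Complex.exp (H s) * (δ s) ^ 2)
      (Complex.exp (-H t) * ∫ s in a..t, Complex.exp (H s) * G s)
    have hsq : C * r ^ 2 ≤ C / ω ^ M := by
      have heq : C * r ^ 2 = k * (C / ω ^ M) := by rw [hrdef, hkdef]; field_simp; ring
      rw [heq]
      calc k * (C / ω ^ M) ≤ (1 / 2) * (C / ω ^ M) :=
            mul_le_mul_of_nonneg_right hkhalf (by positivity)
        _ ≤ C / ω ^ M := by
            have : (0:ℝ) ≤ C / ω ^ M := by positivity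
            linarith
    have hrsum : r = C / ω ^ M + C / ω ^ M := by rw [hrdef]; ring
    linarith
  -- part 3 : contraction
  have hlip : ∀ δ₁ δ₂ : ℝ → ℂ, ContinuousOn δ₁ (Icc a b) → ContinuousOn δ₂ (Icc a b) →
      (∀ t ∈ Icc a b, ‖δ₁ t‖ ≤ r) → (∀ t ∈ Icc a b, ‖δ₂ t‖ ≤ r) →
      ∀ K : ℝ, (∀ s ∈ Icc a b, ‖δ₁ s - δ₂ s‖ ≤ K) → ∀ t ∈ Icc a b,
      ‖(-Complex.exp (-H t) * ∫ s in a..t, Complex.exp (H s) * ((δ₁ s) ^ 2 + G s)) -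
       (-Complex.exp (-H t) * ∫ s in a..t, Complex.exp (H s) * ((δ₂ s) ^ 2 + G s))‖
        ≤ k * K := by
    intro δ₁ δ₂ h1 h2 hb1 hb2 K hK t ht
    have hK0 : 0 ≤ K := le_trans (norm_nonneg _) (hK a haI)
    have hi1 : IntervalIntegrable (fun s => Complex.exp (H s) * ((δ₁ s) ^ 2 + G s))
        MeasureTheory.volume a t := hint _ ((h1.pow 2).add hG) t ht
    have hi2 : IntervalIntegrable (fun s => Complex.exp (H s) * ((δ₂ s) ^ 2 + G s))
        MeasureTheory.volume a t := hint _ ((h2.pow 2).add hG) t ht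
    have hIeq : (∫ s in a..t, Complex.exp (H s) * ((δ₁ s) ^ 2 + G s))
        - (∫ s in a..t, Complex.exp (H s) * ((δ₂ s) ^ 2 + G s))
        = ∫ s in a..t, Complex.exp (H s) * ((δ₁ s) ^ 2 - (δ₂ s) ^ 2) := by
      rw [← intervalIntegral.integral_sub hi1 hi2]
      apply intervalIntegral.integral_congr
      intro s _; ring
    have heq1 : (-Complex.exp (-H t) * ∫ s in a..t, Complex.exp (H s) * ((δ₁ s) ^ 2 + G s)) -
        (-Complex.exp (-H t) * ∫ s in a..t, Complex.exp (H s) * ((δ₂ s) ^ 2 + G s))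
        = -(Complex.exp (-H t) * ((∫ s in a..t, Complex.exp (H s) * ((δ₁ s) ^ 2 + G s))
            - (∫ s in a..t, Complex.exp (H s) * ((δ₂ s) ^ 2 + G s)))) := by ring
    rw [heq1, norm_neg, hIeq]
    have hb := hbound (fun s => (δ₁ s) ^ 2 - (δ₂ s) ^ 2) (2 * r * K)
      (by positivity)
      (fun s hs => by
        have hfac : (δ₁ s) ^ 2 - (δ₂ s) ^ 2 = (δ₁ s + δ₂ s) * (δ₁ s - δ₂ s) := by ring
        show ‖(δ₁ s) ^ 2 - (δ₂ s) ^ 2‖ ≤ 2 * r * K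
        rw [hfac, norm_mul]
        have hadd : ‖δ₁ s + δ₂ s‖ ≤ r + r :=
          (norm_add_le _ _).trans (add_le_add (hb1 s hs) (hb2 s hs))
        calc ‖δ₁ s + δ₂ s‖ * ‖δ₁ s - δ₂ s‖ ≤ (r + r) * K :=
              mul_le_mul hadd (hK s hs) (norm_nonneg _) (by positivity)
          _ = 2 * r * K := by ring) t ht
    have heq2 : C * (2 * r * K) = k * K := by rw [hrdef, hkdef]; field_simp; ring
    linarith
  -- continuity of S δ
  have hScont : ∀ δ : ℝ → ℂ, ContinuousOn δ (Icc a b) →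
      ContinuousOn (fun t => -Complex.exp (-H t)
        * ∫ s in a..t, Complex.exp (H s) * ((δ s) ^ 2 + G s)) (Icc a b) := by
    intro δ hδ
    apply ContinuousOn.mul
    · exact (hH.neg.cexp).neg
    · have hIOn : MeasureTheory.IntegrableOn
          (fun s => Complex.exp (H s) * ((δ s) ^ 2 + G s)) (uIcc a b)
          MeasureTheory.volume := by
        rw [uIcc_of_le hab]
        exact (hH.cexp.mul ((hδ.pow 2).add hG)).integrableOn_compact isCompact_Icc
      have hc := intervalIntegral.continuousOn_primitive_interval hIOn
      rwa [uIcc_of_le hab] at hc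
  -- dependence only on values on Icc
  have hcong : ∀ (δ δ'' : ℝ → ℂ), (∀ s ∈ Icc a b, δ s = δ'' s) → ∀ t ∈ Icc a b,
      (-Complex.exp (-H t) * ∫ s in a..t, Complex.exp (H s) * ((δ s) ^ 2 + G s)) =
      (-Complex.exp (-H t) * ∫ s in a..t, Complex.exp (H s) * ((δ'' s) ^ 2 + G s)) := by
    intro δ δ'' he t ht
    congr 1
    apply intervalIntegral.integral_congr
    intro s hs
    have hsI : s ∈ Icc a b := by
      rw [uIcc_of_le ht.1] at hs
      exact ⟨hs.1, hs.2.trans ht.2⟩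
    show Complex.exp (H s) * (δ s ^ 2 + G s) = Complex.exp (H s) * (δ'' s ^ 2 + G s)
    rw [he s hsI]
  refine ⟨hkhalf, hmap, hlip, ?_⟩
  -- part 4 : the fixed point
  classical
  let ext : C(Icc a b, ℂ) → ℝ → ℂ := fun f => IccExtend hab f
  have hext_cont : ∀ f : C(Icc a b, ℂ), ContinuousOn (ext f) (Icc a b) :=
    fun f => (f.continuous.Icc_extend').continuousOn
  have hext_eq : ∀ (f : C(Icc a b, ℂ)) (t : ℝ) (ht : t ∈ Icc a b), ext f t = f ⟨t, ht⟩ :=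
    fun f t ht => IccExtend_of_mem hab f ht
  let T : C(Icc a b, ℂ) → C(Icc a b, ℂ) := fun f =>
    ⟨fun x => -Complex.exp (-H (x : ℝ))
        * ∫ s in a..(x : ℝ), Complex.exp (H s) * ((ext f s) ^ 2 + G s),
      (hScont (ext f) (hext_cont f)).restrict⟩
  have hmem : ∀ f : C(Icc a b, ℂ),
      f ∈ Metric.closedBall (0 : C(Icc a b, ℂ)) r ↔ ∀ x : Icc a b, ‖f x‖ ≤ r := by
    intro f
    rw [Metric.mem_closedBall, ContinuousMap.dist_le hr0]
    simp [dist_eq_norm]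
  have hTmaps : ∀ f : C(Icc a b, ℂ), f ∈ Metric.closedBall (0 : C(Icc a b, ℂ)) r →
      T f ∈ Metric.closedBall (0 : C(Icc a b, ℂ)) r := by
    intro f hf
    rw [hmem]
    intro x
    exact hmap (ext f) (hext_cont f)
      (fun t ht => by rw [hext_eq f t ht]; exact (hmem f).1 hf _) x x.2
  let T' : Metric.closedBall (0 : C(Icc a b, ℂ)) r → Metric.closedBall (0 : C(Icc a b, ℂ)) r :=
    fun f => ⟨T f.1, hTmaps f.1 f.2⟩
  have hball_ne : Nonempty (Metric.closedBall (0 : C(Icc a b, ℂ)) r) :=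
    ⟨⟨0, Metric.mem_closedBall_self hr0⟩⟩
  have hball_cs : CompleteSpace (Metric.closedBall (0 : C(Icc a b, ℂ)) r) :=
    @IsClosed.completeSpace_coe _ _ _ _ Metric.isClosed_closedBall
  have hlipT : LipschitzWith ⟨k, hk0⟩ T' := by
    apply LipschitzWith.of_dist_le_mul
    intro f g
    rw [Subtype.dist_eq, Subtype.dist_eq]
    have hkd : (0:ℝ) ≤ k * dist f.1 g.1 := mul_nonneg hk0 dist_nonneg
    show dist (T f.1) (T g.1) ≤ k * dist f.1 g.1
    rw [ContinuousMap.dist_le hkd]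
    intro x
    rw [dist_eq_norm]
    have hKb : ∀ s ∈ Icc a b, ‖ext f.1 s - ext g.1 s‖ ≤ dist f.1 g.1 := by
      intro s hs
      rw [hext_eq _ s hs, hext_eq _ s hs, ← dist_eq_norm]
      exact ContinuousMap.dist_apply_le_dist _
    exact hlip (ext f.1) (ext g.1) (hext_cont _) (hext_cont _)
      (fun t ht => by rw [hext_eq _ t ht]; exact (hmem _).1 f.2 _)
      (fun t ht => by rw [hext_eq _ t ht]; exact (hmem _).1 g.2 _)
      (dist f.1 g.1) hKb x x.2
  have hcw : ContractingWith ⟨k, hk0⟩ T' := by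
    constructor
    · change k < (1:ℝ)
      show k < (1:ℝ)
      linarith
    · exact hlipT
  let g := ContractingWith.fixedPoint T' hcw
  have hgfix : T' g = g := hcw.fixedPoint_isFixedPt
  refine ⟨ext g.1, hext_cont _, ?_, ?_, ?_⟩
  · intro t ht
    rw [hext_eq _ t ht]
    exact (hmem _).1 g.2 _
  · intro t ht
    have h1 : (T g.1) ⟨t, ht⟩ = g.1 ⟨t, ht⟩ :=
      congrFun (congrArg (fun f : C(Icc a b, ℂ) => ⇑f) (congrArg Subtype.val hgfix)) ⟨t, ht⟩
    rw [hext_eq _ t ht]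
    exact h1.symm
  · intro δ' hδ'c hδ'b hδ'fix t ht
    let f' : C(Icc a b, ℂ) := ⟨(Icc a b).restrict δ', hδ'c.restrict⟩
    have hf'ball : f' ∈ Metric.closedBall (0 : C(Icc a b, ℂ)) r := by
      rw [hmem]
      intro x
      exact hδ'b x x.2
    have hextf' : ∀ s ∈ Icc a b, ext f' s = δ' s := by
      intro s hs
      rw [hext_eq _ s hs]
      rfl
    have hfix' : T' ⟨f', hf'ball⟩ = ⟨f', hf'ball⟩ := by
      apply Subtype.ext
      apply ContinuousMap.ext
      intro x
      show -Complex.exp (-H (x : ℝ))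
          * (∫ s in a..(x : ℝ), Complex.exp (H s) * ((ext f' s) ^ 2 + G s)) = f' x
      have hc := hcong (ext f') δ' hextf' x x.2
      exact hc.trans (hδ'fix x x.2).symm
    have huniq : (⟨f', hf'ball⟩ : Metric.closedBall (0 : C(Icc a b, ℂ)) r) = g :=
      hcw.fixedPoint_unique hfix'
    have h2 : f' ⟨t, ht⟩ = g.1 ⟨t, ht⟩ := by rw [← huniq]
    calc δ' t = f' ⟨t, ht⟩ := rfl
      _ = g.1 ⟨t, ht⟩ := h2
      _ = ext g.1 t := (hext_eq _ t ht).symm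
end

section
/- If δ : [a,b] → ℂ is continuous and satisfies the integral equation δ(t) = −exp(−H(t)) ∫_a^t exp(H(s)) ((δ(s))² + G(s)) ds, where H(t) = 2∫_a^t r_M(s) ds and G = r_M' + r_M² + ω²q with r_M continuously differentiable, then r = r_M + δ is differentiable and satisfies the Riccati equation r' + r² + ω²q = 0 on [a,b]. -/
open Set

/-- If `δ` is continuous and satisfies the Volterra integral equation
`δ(t) = −exp(−H(t)) ∫_a^t exp(H(s)) (δ(s)² + G(s)) ds`, with
`H(t) = 2∫_a^t r_M` and `G = r_M' + r_M² + ω² q`, then `r = r_M + δ` is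
differentiable and satisfies the Riccati equation `r' + r² + ω² q = 0`
on `[a,b]`. -/
theorem riccati_solution_from_integral_equation
    (a b : ℝ) (hab : a ≤ b)
    (q : ℝ → ℝ) (hq : ContinuousOn q (Icc a b)) (ω : ℝ)
    (rM : ℝ → ℂ) (hrM : ContDiff ℝ 1 rM)
    (H : ℝ → ℂ) (hH : H = fun t => 2 * ∫ s in a..t, rM s)
    (G : ℝ → ℂ)
    (hGdef : G = fun t => deriv rM t + (rM t) ^ 2 + (ω : ℂ) ^ 2 * (q t : ℂ))
    (δ : ℝ → ℂ) (hδc : ContinuousOn δ (Icc a b))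
    (hδeq : ∀ t ∈ Icc a b, δ t = -Complex.exp (-H t)
      * ∫ s in a..t, Complex.exp (H s) * ((δ s) ^ 2 + G s))
    (r : ℝ → ℂ) (hr : r = fun t => rM t + δ t) :
    ∀ t ∈ Icc a b,
      HasDerivWithinAt r (-((r t) ^ 2 + (ω : ℂ) ^ 2 * (q t : ℂ))) (Icc a b) t := by
  intro t ht
  haveI : Fact (t ∈ Icc a b) := ⟨ht⟩
  set g : ℝ → ℂ := fun s => Complex.exp (H s) * ((δ s) ^ 2 + G s) with hg
  -- H has derivative 2 * rM
  have hrMc : Continuous rM := hrM.continuous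
  have hHd : ∀ x : ℝ, HasDerivAt H (2 * rM x) x := by
    intro x
    rw [hH]
    exact ((hrMc.integral_hasStrictDerivAt a x).hasDerivAt).const_mul 2
  have hHc : Continuous H := by
    exact continuous_iff_continuousAt.2 fun x => (hHd x).continuousAt
  -- continuity of G on Icc
  have hGc : ContinuousOn G (Icc a b) := by
    rw [hGdef]
    apply ContinuousOn.add
    · exact ((hrM.continuous_deriv le_rfl).add (hrMc.pow 2)).continuousOn
    · exact continuousOn_const.mul (Complex.continuous_ofReal.comp_continuousOn hq)
  have hgc : ContinuousOn g (Icc a b) := by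
    apply (hHc.cexp.continuousOn).mul ((hδc.pow 2).add hGc)
  -- FTC: the primitive of g
  have hgint : IntervalIntegrable g MeasureTheory.volume a t :=
    (hgc.mono (by rw [uIcc_of_le ht.1]; exact Icc_subset_Icc le_rfl ht.2)).intervalIntegrable
  have hF : HasDerivWithinAt (fun u => ∫ s in a..u, g s) (g t) (Icc a b) t :=
    intervalIntegral.integral_hasDerivWithinAt_right hgint
      (hgc.stronglyMeasurableAtFilter_nhdsWithin measurableSet_Icc t)
      (hgc t ht)
  -- the outer function
  have hE : HasDerivAt (fun u => -Complex.exp (-H u)) (2 * rM t * Complex.exp (-H t)) t := by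
    have : HasDerivAt (fun u => Complex.exp (-H u)) (Complex.exp (-H t) * -(2 * rM t)) t :=
      ((hHd t).neg).cexp
    have := this.neg
    exact this.congr_deriv (by ring)
  have hφ : HasDerivWithinAt (fun u => -Complex.exp (-H u) * ∫ s in a..u, g s)
      (2 * rM t * Complex.exp (-H t) * (∫ s in a..t, g s) + -Complex.exp (-H t) * g t)
      (Icc a b) t := hE.hasDerivWithinAt.mul hF
  -- simplify the derivative value
  have key1 : Complex.exp (-H t) * ∫ s in a..t, g s = -δ t := by
    rw [hδeq t ht]; ring
  have key2 : Complex.exp (-H t) * g t = (δ t) ^ 2 + G t := by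
    rw [hg]
    rw [← mul_assoc, ← Complex.exp_add, neg_add_cancel, Complex.exp_zero, one_mul]
  have hδd : HasDerivWithinAt δ (-(2 * rM t * δ t) - ((δ t) ^ 2 + G t)) (Icc a b) t := by
    have heq : ∀ u ∈ Icc a b, δ u = -Complex.exp (-H u) * ∫ s in a..u, g s := hδeq
    refine (hφ.congr heq (heq t ht)).congr_deriv ?_
    have : 2 * rM t * Complex.exp (-H t) * (∫ s in a..t, g s)
        = 2 * rM t * (Complex.exp (-H t) * ∫ s in a..t, g s) := by ring
    rw [this, key1]
    have : -Complex.exp (-H t) * g t = -(Complex.exp (-H t) * g t) := by ring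
    rw [this, key2]
    ring
  -- combine with rM
  have hrMd : HasDerivWithinAt rM (deriv rM t) (Icc a b) t := by
    exact ((hrM.differentiable one_ne_zero).differentiableAt.hasDerivAt).hasDerivWithinAt
  have := hrMd.add hδd
  rw [hr]
  refine this.congr_deriv ?_
  rw [hGdef]
  simp only
  ring
end

section
/- Suppose r : [a,b] → ℂ solves the Riccati equation r' + r² + ω²q = 0 with Im r(t) > 0 for all t. Define α'(t) = Im r(t) and m(t) = 1/α'(t). Then m satisfies Appell's equation m''' + 4ω²q m' + 2ω²q' m = 0, provided Re r(t) = −(1/2)α''(t)/α'(t) (equivalently, α'' = −2 α' Re r) and all the required derivatives exist. -/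
open Set Filter Topology

/-- If `r` solves the Riccati equation `r' + r² + ω² q = 0` with `Im r > 0`,
`α' := Im r`, `m := 1/α'`, and `Re r = −α''/(2α')`, then `m` satisfies
Appell's equation `m''' + 4ω² q m' + 2ω² q' m = 0`. -/
theorem appell_from_riccati
    (a b : ℝ) (hab : a < b)
    (q : ℝ → ℝ) (hq : ContDiff ℝ 1 q) (ω : ℝ)
    (r : ℝ → ℂ) (hr : ContDiff ℝ 3 r)
    (hric : ∀ t ∈ Icc a b,
      deriv r t + (r t) ^ 2 + (ω : ℂ) ^ 2 * (q t : ℂ) = 0)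
    (hIm : ∀ t ∈ Icc a b, 0 < (r t).im)
    (hRe : ∀ t ∈ Icc a b,
      (r t).re = -(deriv (fun s => (r s).im) t) / (2 * (r t).im))
    (m : ℝ → ℝ) (hm : m = fun t => 1 / (r t).im) :
    ∀ t ∈ Icc a b,
      deriv (deriv (deriv m)) t + 4 * ω ^ 2 * q t * deriv m t
        + 2 * ω ^ 2 * deriv q t * m t = 0 := by
  set v : ℝ → ℝ := fun t => (r t).im with hv_def
  set u : ℝ → ℝ := fun t => (r t).re with hu_def
  have hrd : Differentiable ℝ r := hr.differentiable (by norm_num)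
  have hv3 : ContDiff ℝ 3 v := Complex.imCLM.contDiff.comp hr
  have hu3 : ContDiff ℝ 3 u := Complex.reCLM.contDiff.comp hr
  have hvd : Differentiable ℝ v := hv3.differentiable (by norm_num)
  have hud : Differentiable ℝ u := hu3.differentiable (by norm_num)
  have hqd : Differentiable ℝ q := hq.differentiable (by norm_num)
  have hdv : deriv v = fun t => (deriv r t).im := by
    funext t
    exact (Complex.imCLM.hasFDerivAt.comp_hasDerivAt t (hrd t).hasDerivAt).deriv
  have hdu : deriv u = fun t => (deriv r t).re := by
    funext t
    exact (Complex.reCLM.hasFDerivAt.comp_hasDerivAt t (hrd t).hasDerivAt).deriv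
  -- pointwise Riccati consequences on Icc
  have hric' : ∀ s ∈ Icc a b, deriv r s = -((r s) ^ 2) - (ω : ℂ) ^ 2 * (q s : ℂ) := by
    intro s hs; have := hric s hs; linear_combination this
  have hv' : ∀ s ∈ Icc a b, deriv v s = -2 * u s * v s := by
    intro s hs
    rw [hdv]
    show (deriv r s).im = _
    rw [hric' s hs]
    simp [Complex.sub_im, Complex.mul_im, pow_two, Complex.neg_im]
    ring
  have hu' : ∀ s ∈ Icc a b, deriv u s = v s ^ 2 - u s ^ 2 - ω ^ 2 * q s := by
    intro s hs
    rw [hdu]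
    show (deriv r s).re = _
    rw [hric' s hs]
    simp [Complex.sub_re, Complex.mul_re, pow_two, Complex.neg_re]
    rfl
  -- first derivative of m on Icc
  have hdm : ∀ s ∈ Icc a b, deriv m s = 2 * u s / v s := by
    intro s hs
    have hne : v s ≠ 0 := ne_of_gt (hIm s hs)
    have h1 : HasDerivAt m (-(deriv v s) / v s ^ 2) s := by
      have := ((hvd s).hasDerivAt).inv hne
      have e : m = v⁻¹ := by rw [hm]; funext t; simp [v]
      rw [e]; exact this
    rw [h1.deriv, hv' s hs]
    field_simp
  -- second derivative on Ioo
  set g : ℝ → ℝ := fun t => (2 * (u t * u t) + 2 * (v t * v t) - 2 * ω ^ 2 * q t) / v t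
    with hg_def
  have hdm2 : ∀ s ∈ Ioo a b, deriv (deriv m) s = g s := by
    intro s hs
    have hne : v s ≠ 0 := ne_of_gt (hIm s (Ioo_subset_Icc_self hs))
    have hev : deriv m =ᶠ[𝓝 s] fun t => 2 * u t / v t := by
      filter_upwards [Icc_mem_nhds hs.1 hs.2] with t ht using hdm t ht
    have h2 : HasDerivAt (fun t => 2 * u t / v t)
        ((2 * deriv u s * v s - 2 * u s * deriv v s) / v s ^ 2) s :=
      ((hud s).hasDerivAt.const_mul 2).div (hvd s).hasDerivAt hne
    rw [hev.deriv_eq, h2.deriv, hg_def]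
    rw [hu' s (Ioo_subset_Icc_self hs), hv' s (Ioo_subset_Icc_self hs)]
    field_simp
    ring
  -- the Appell expression
  set E : ℝ → ℝ := fun t => deriv (deriv (deriv m)) t + 4 * ω ^ 2 * q t * deriv m t
      + 2 * ω ^ 2 * deriv q t * m t with hE_def
  have hE0 : ∀ s ∈ Ioo a b, E s = 0 := by
    intro s hs
    have hsI : s ∈ Icc a b := Ioo_subset_Icc_self hs
    have hne : v s ≠ 0 := ne_of_gt (hIm s hsI)
    have hev : deriv (deriv m) =ᶠ[𝓝 s] g := by
      filter_upwards [isOpen_Ioo.mem_nhds hs] with t ht using hdm2 t ht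
    have hN : HasDerivAt (fun t => 2 * (u t * u t) + 2 * (v t * v t) - 2 * ω ^ 2 * q t)
        (2 * (deriv u s * u s + u s * deriv u s)
          + 2 * (deriv v s * v s + v s * deriv v s) - 2 * ω ^ 2 * deriv q s) s := by
      exact ((((hud s).hasDerivAt.mul (hud s).hasDerivAt).const_mul 2).add
        (((hvd s).hasDerivAt.mul (hvd s).hasDerivAt).const_mul 2)).sub
        ((hqd s).hasDerivAt.const_mul (2 * ω ^ 2))
    have hg' : HasDerivAt g
        (((2 * (deriv u s * u s + u s * deriv u s)
          + 2 * (deriv v s * v s + v s * deriv v s) - 2 * ω ^ 2 * deriv q s) * v s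
          - (2 * (u s * u s) + 2 * (v s * v s) - 2 * ω ^ 2 * q s) * deriv v s) / v s ^ 2) s :=
      hN.div (hvd s).hasDerivAt hne
    have h3 : deriv (deriv (deriv m)) s = deriv g s := hev.deriv_eq
    rw [hE_def]
    simp only
    rw [h3, hg'.deriv, hdm s hsI, hm]
    rw [hu' s hsI, hv' s hsI]
    beta_reduce
    rw [show (r s).im = v s from rfl]
    field_simp
    ring
  -- continuity of E on a neighborhood of Icc
  have hvc : Continuous v := hv3.continuous
  set U : Set ℝ := v ⁻¹' ({0}ᶜ) with hU_def
  have hUo : IsOpen U := isOpen_compl_singleton.preimage hvc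
  have hsub : Icc a b ⊆ U := fun t ht => ne_of_gt (hIm t ht)
  have hm3 : ContDiffOn ℝ 3 m U := by
    rw [hm]
    simp only [one_div]
    exact hv3.contDiffOn.inv (fun t ht => ht)
  have d1 : ContDiffOn ℝ 2 (deriv m) U := hm3.deriv_of_isOpen hUo (by norm_num)
  have d2 : ContDiffOn ℝ 1 (deriv (deriv m)) U := d1.deriv_of_isOpen hUo (by norm_num)
  have d3 : ContinuousOn (deriv (deriv (deriv m))) U :=
    d2.continuousOn_deriv_of_isOpen hUo le_rfl
  have hq'c : Continuous (deriv q) := hq.continuous_deriv le_rfl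
  have hEc : ContinuousOn E U := by
    apply ContinuousOn.add
    apply ContinuousOn.add d3
    · exact (continuous_const.mul hq.continuous).continuousOn.mul d1.continuousOn
    · exact (continuous_const.mul hq'c).continuousOn.mul hm3.continuousOn
  -- conclude on Icc by density of Ioo
  intro t ht
  have htc : t ∈ closure (Ioo a b) := by rw [closure_Ioo hab.ne]; exact ht
  have hEa : ContinuousAt E t := hEc.continuousAt (hUo.mem_nhds (hsub ht))
  have h1 : Tendsto E (𝓝[Ioo a b] t) (𝓝 (E t)) := hEa.continuousWithinAt
  have h2 : Tendsto E (𝓝[Ioo a b] t) (𝓝 0) := by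
    apply Tendsto.congr' _ tendsto_const_nhds
    filter_upwards [self_mem_nhdsWithin] with s hs using (hE0 s hs).symm
  have hnb : (𝓝[Ioo a b] t).NeBot := mem_closure_iff_nhdsWithin_neBot.mp htc
  exact tendsto_nhds_unique h1 h2
end
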